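/- Let Q₃ be the quadratic form on ℝ³ given by Q₃(x) = x₁x₂ + x₂x₃ + x₃x₁, and let ι : ℝ³ → Cl(Q₃) be the canonical embedding; the standard basis vectors u₁, u₂, u₃ are null and pairwise satisfy ι(uᵢ)ι(uⱼ) + ι(uⱼ)ι(uᵢ) = 1 for i ≠ j. Let ω := (1/6)·Σ_{σ ∈ S₃} sgn(σ)·ι(u_{σ(1)})ι(u_{σ(2)})ι(u_{σ(3)}) be the trivector a₁∧a₂∧a₃. Then the element i := −2ω commutes with ι(uₖ) for k = 1, 2, 3 (hence lies in the center of Cl(Q₃)), and i² = −1. -/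

import Mathlib

/-- The quadratic form `Q₃(x) = x₁x₂ + x₂x₃ + x₃x₁` on `ℝ³`. -/
noncomputable def Q3 : QuadraticForm ℝ (Fin 3 → ℝ) :=
  Matrix.toQuadraticMap' !![0, 1, 0; 0, 0, 1; 1, 0, 0]

/-- in `Cl(Q₃) ≅ G_{1,2}`, the element `i := −2·(a₁∧a₂∧a₃)`, where
`a₁∧a₂∧a₃` is the antisymmetrized product `(1/6)Σ_σ sgn(σ) ι(u_{σ1})ι(u_{σ2})ι(u_{σ3})`
of the null basis vectors `uᵢ = Pi.single i 1`, commutes with every `ι(u_k)` and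
squares to `−1`. -/
theorem stmt_13
    (u : Fin 3 → (Fin 3 → ℝ)) (hu : ∀ k, u k = Pi.single k 1)
    (ω : CliffordAlgebra Q3)
    (hω : ω = (6⁻¹ : ℝ) • ∑ σ : Equiv.Perm (Fin 3),
      ((Equiv.Perm.sign σ : ℤ) •
        (CliffordAlgebra.ι Q3 (u (σ 0)) * CliffordAlgebra.ι Q3 (u (σ 1)) *
          CliffordAlgebra.ι Q3 (u (σ 2)))))
    (I : CliffordAlgebra Q3) (hI : I = (-2 : ℝ) • ω) :
    (∀ k, I * CliffordAlgebra.ι Q3 (u k) = CliffordAlgebra.ι Q3 (u k) * I) ∧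
    I * I = -1 := by
  set A := CliffordAlgebra.ι Q3 (u 0) with hA
  set B := CliffordAlgebra.ι Q3 (u 1) with hB
  set C := CliffordAlgebra.ι Q3 (u 2) with hC
  -- evaluation of the quadratic form
  have hQ3 : ∀ x : Fin 3 → ℝ, Q3 x = x 0 * x 1 + x 1 * x 2 + x 2 * x 0 := by
    intro x
    simp [Q3, Matrix.toQuadraticMap', Matrix.toQuadraticForm', LinearMap.BilinMap.toQuadraticMap_apply,
      Matrix.toLinearMap₂'_apply, Fin.sum_univ_succ]
    ring
  -- the basis vectors are null
  have hQ : ∀ k, Q3 (u k) = 0 := by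
    intro k
    rw [hu, hQ3]
    fin_cases k <;> norm_num [Pi.single_apply, Fin.ext_iff]
  have hAA : A * A = 0 := by
    rw [hA, CliffordAlgebra.ι_sq_scalar, hQ, map_zero]
  have hBB : B * B = 0 := by
    rw [hB, CliffordAlgebra.ι_sq_scalar, hQ, map_zero]
  have hCC : C * C = 0 := by
    rw [hC, CliffordAlgebra.ι_sq_scalar, hQ, map_zero]
  -- the polarization relations
  have hpol : ∀ i j : Fin 3, i ≠ j → QuadraticMap.polar Q3 (u i) (u j) = 1 := by
    intro i j hij
    rw [hu, hu, QuadraticMap.polar, hQ3, hQ3, hQ3]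
    fin_cases i <;> fin_cases j <;> first | (exact absurd rfl hij) | norm_num [Pi.single_apply, Fin.ext_iff]
  have swaprel : ∀ i j : Fin 3, i ≠ j →
      CliffordAlgebra.ι Q3 (u i) * CliffordAlgebra.ι Q3 (u j)
        + CliffordAlgebra.ι Q3 (u j) * CliffordAlgebra.ι Q3 (u i) = 1 := by
    intro i j hij
    rw [CliffordAlgebra.ι_mul_ι_add_swap, hpol i j hij, map_one]
  have hBA : B * A = 1 - A * B := eq_sub_of_add_eq' (swaprel 0 1 (by decide))
  have hCA : C * A = 1 - A * C := eq_sub_of_add_eq' (swaprel 0 2 (by decide))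
  have hCB : C * B = 1 - B * C := eq_sub_of_add_eq' (swaprel 1 2 (by decide))
  -- generalized rewrite rules for normalization
  have gBA : ∀ x, B * (A * x) = x - A * (B * x) := fun x => by
    rw [← mul_assoc, hBA]; noncomm_ring
  have gCA : ∀ x, C * (A * x) = x - A * (C * x) := fun x => by
    rw [← mul_assoc, hCA]; noncomm_ring
  have gCB : ∀ x, C * (B * x) = x - B * (C * x) := fun x => by
    rw [← mul_assoc, hCB]; noncomm_ring
  have gAA : ∀ x, A * (A * x) = 0 := fun x => by rw [← mul_assoc, hAA, zero_mul]
  have gBB : ∀ x, B * (B * x) = 0 := fun x => by rw [← mul_assoc, hBB, zero_mul]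
  have gCC : ∀ x, C * (C * x) = 0 := fun x => by rw [← mul_assoc, hCC, zero_mul]
  have gA2 : ∀ x : CliffordAlgebra Q3, A * (2 * x) = 2 * (A * x) := fun x => by noncomm_ring
  have gB2 : ∀ x : CliffordAlgebra Q3, B * (2 * x) = 2 * (B * x) := fun x => by noncomm_ring
  have gC2 : ∀ x : CliffordAlgebra Q3, C * (2 * x) = 2 * (C * x) := fun x => by noncomm_ring
  -- enumerate the permutations of `Fin 3`
  have huniv : (Finset.univ : Finset (Equiv.Perm (Fin 3))) =
      {1, Equiv.swap 0 1, Equiv.swap 0 2, Equiv.swap 1 2,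
       Equiv.swap 0 1 * Equiv.swap 0 2, Equiv.swap 0 2 * Equiv.swap 0 1} := by decide
  have s1 : ((Equiv.Perm.sign (1 : Equiv.Perm (Fin 3)) : ℤ)) = 1 := by decide
  have s2 : ((Equiv.Perm.sign (Equiv.swap (0:Fin 3) 1) : ℤ)) = -1 := by decide
  have s3 : ((Equiv.Perm.sign (Equiv.swap (0:Fin 3) 2) : ℤ)) = -1 := by decide
  have s4 : ((Equiv.Perm.sign (Equiv.swap (1:Fin 3) 2) : ℤ)) = -1 := by decide
  have s5 : ((Equiv.Perm.sign (Equiv.swap (0:Fin 3) 1 * Equiv.swap 0 2) : ℤ)) = 1 := by decide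
  have s6 : ((Equiv.Perm.sign (Equiv.swap (0:Fin 3) 2 * Equiv.swap 0 1) : ℤ)) = 1 := by decide
  have key : ω = (6⁻¹ : ℝ) •
      (A*B*C - B*A*C - C*B*A - A*C*B + C*A*B + B*C*A) := by
    rw [hω, huniv, Finset.sum_insert (by decide), Finset.sum_insert (by decide),
      Finset.sum_insert (by decide), Finset.sum_insert (by decide),
      Finset.sum_insert (by decide), Finset.sum_singleton, s1, s2, s3, s4, s5, s6]
    have e1 : (Equiv.swap (0:Fin 3) 1) 0 = 1 := by decide
    have e2 : (Equiv.swap (0:Fin 3) 1) 1 = 0 := by decide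
    have e3 : (Equiv.swap (0:Fin 3) 1) 2 = 2 := by decide
    have e4 : (Equiv.swap (0:Fin 3) 2) 0 = 2 := by decide
    have e5 : (Equiv.swap (0:Fin 3) 2) 1 = 1 := by decide
    have e6 : (Equiv.swap (0:Fin 3) 2) 2 = 0 := by decide
    have e7 : (Equiv.swap (1:Fin 3) 2) 0 = 0 := by decide
    have e8 : (Equiv.swap (1:Fin 3) 2) 1 = 2 := by decide
    have e9 : (Equiv.swap (1:Fin 3) 2) 2 = 1 := by decide
    have f1 : (Equiv.swap (0:Fin 3) 1 * Equiv.swap 0 2 : Equiv.Perm (Fin 3)) 0 = 2 := by decide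
    have f2 : (Equiv.swap (0:Fin 3) 1 * Equiv.swap 0 2 : Equiv.Perm (Fin 3)) 1 = 0 := by decide
    have f3 : (Equiv.swap (0:Fin 3) 1 * Equiv.swap 0 2 : Equiv.Perm (Fin 3)) 2 = 1 := by decide
    have f4 : (Equiv.swap (0:Fin 3) 2 * Equiv.swap 0 1 : Equiv.Perm (Fin 3)) 0 = 1 := by decide
    have f5 : (Equiv.swap (0:Fin 3) 2 * Equiv.swap 0 1 : Equiv.Perm (Fin 3)) 1 = 2 := by decide
    have f6 : (Equiv.swap (0:Fin 3) 2 * Equiv.swap 0 1 : Equiv.Perm (Fin 3)) 2 = 0 := by decide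
    rw [e1, e2, e3, e4, e5, e6, e7, e8, e9, f1, f2, f3, f4, f5, f6]
    simp only [Equiv.Perm.one_apply, one_smul, neg_smul, ← hA, ← hB, ← hC]
    module
  -- closed form for I
  have hI' : I = A - B + C - 2 * (A * B * C) := by
    rw [hI, key, smul_smul]
    have red : A*B*C - B*A*C - C*B*A - A*C*B + C*A*B + B*C*A
        = 6 * (A*B*C) - 3*A + 3*B - 3*C := by
      have n1 : B*A*C = C - A*(B*C) := by
        rw [hBA]; noncomm_ring
      have n2 : A*C*B = A - A*(B*C) := by
        rw [mul_assoc, hCB]; noncomm_ring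
      have n3 : B*C*A = B - C + A*(B*C) := by
        rw [mul_assoc, hCA, mul_sub, mul_one, ← mul_assoc, n1]; noncomm_ring
      have n4 : C*A*B = B - A + A*(B*C) := by
        rw [hCA, sub_mul, one_mul, n2]; noncomm_ring
      have n5 : C*B*A = A - B + C - A*(B*C) := by
        rw [hCB, sub_mul, one_mul, n3]; noncomm_ring
      rw [n1, n2, n3, n4, n5]; noncomm_ring
    rw [red]
    have h2 : ((-2 : ℝ) * 6⁻¹) = -(3⁻¹ : ℝ) := by norm_num
    rw [h2]
    have : (6 : CliffordAlgebra Q3) * (A*B*C) - 3*A + 3*B - 3*C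
        = (-3 : ℝ) • (A - B + C - 2 * (A*B*C)) := by
      rw [Algebra.smul_def]; push_cast [map_neg, map_ofNat]; noncomm_ring
    rw [this, smul_smul]
    norm_num
  constructor
  · intro k
    fin_cases k
    · show I * A = A * I
      rw [hI']
      simp only [mul_sub, sub_mul, mul_add, add_mul, mul_one, one_mul,
        mul_zero, zero_mul, mul_assoc, gA2, gB2, gC2,
        gBA, gCA, gCB, gAA, gBB, gCC, hBA, hCA, hCB, hAA, hBB, hCC]
      noncomm_ring
    · show I * B = B * I
      rw [hI']
      simp only [mul_sub, sub_mul, mul_add, add_mul, mul_one, one_mul,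
        mul_zero, zero_mul, mul_assoc, gA2, gB2, gC2,
        gBA, gCA, gCB, gAA, gBB, gCC, hBA, hCA, hCB, hAA, hBB, hCC]
      noncomm_ring
    · show I * C = C * I
      rw [hI']
      simp only [mul_sub, sub_mul, mul_add, add_mul, mul_one, one_mul,
        mul_zero, zero_mul, mul_assoc, gA2, gB2, gC2,
        gBA, gCA, gCB, gAA, gBB, gCC, hBA, hCA, hCB, hAA, hBB, hCC]
      noncomm_ring
  · rw [hI']
    simp only [mul_sub, sub_mul, mul_add, add_mul, mul_one, one_mul,
      mul_zero, zero_mul, mul_assoc, gA2, gB2, gC2,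
      gBA, gCA, gCB, gAA, gBB, gCC, hBA, hCA, hCB, hAA, hBB, hCC]
    noncomm_ring
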